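/- Let n ≥ 1, 0 < a ≤ n and b > 0. If either a < n, or (a = n and 0 < b ≤ 1), then ∫_{ℝⁿ} (1+4π²|x|²)^{−a/2} (1+ln(1+4π²|x|²))^{−b} dx = ∞. In particular, for 0 < p < ∞ and 0 < γ < ∞ with either t·min(1,p) < n, or t·min(1,p) = n and min(1,p)·γ/2 ≤ 1, one has ‖H^{(t,γ)}‖_{L^{min(1,p)}(ℝⁿ)} = ∞, where H^{(t,γ)}(x) = (1+4π²|x|²)^{−t/2} (1+ln(1+4π²|x|²))^{−γ/2}. -/

import Mathlib

open MeasureTheory Real SchwartzMap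
open scoped FourierTransform ENNReal NNReal

noncomputable section

abbrev Eucl (n : ℕ) := EuclideanSpace ℝ (Fin n)

/-- Decreasing rearrangement (with respect to the measure `μ`) of a function whose pointwise
"absolute value" is `F : α → ℝ≥0∞`, with the convention `sInf ∅ = ∞`. -/
def rearr {α : Type*} [MeasurableSpace α] (μ : Measure α)
    (F : α → ℝ≥0∞) (t : ℝ) : ℝ≥0∞ :=
  sInf {s : ℝ≥0∞ | μ {x | s < F x} ≤ ENNReal.ofReal t}

/-- The Lorentz quasi-norm `‖·‖_{L^{p,q}}`:
`(∫_0^∞ (t^{1/p} f^*(t))^q dt/t)^{1/q}` for `q < ∞`, and `sup_{t>0} t^{1/p} f^*(t)` for `q = ∞`. -/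
def lorentzNorm {α : Type*} [MeasurableSpace α] (μ : Measure α)
    (F : α → ℝ≥0∞) (p : ℝ) (q : ℝ≥0∞) : ℝ≥0∞ :=
  if q = ∞ then ⨆ t ∈ Set.Ioi (0:ℝ), ENNReal.ofReal (t ^ (1/p)) * rearr μ F t
  else (∫⁻ t in Set.Ioi (0:ℝ),
      (ENNReal.ofReal (t ^ (1/p)) * rearr μ F t) ^ q.toReal * (ENNReal.ofReal t)⁻¹) ^ (1/q.toReal)

/-- Lorentz quasi-norm of a complex-valued function on `ℝⁿ` (Lebesgue measure). -/
def lorentzNormC {n : ℕ} (f : Eucl n → ℂ) (p : ℝ) (q : ℝ≥0∞) : ℝ≥0∞ :=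
  lorentzNorm (volume : Measure (Eucl n)) (fun x => (‖f x‖₊ : ℝ≥0∞)) p q

/-- The operator `(I - Δ)^{s/2}`, i.e. `f ↦ ((1+4π²|·|²)^{s/2} f̂)^∨`. -/
def besselOp {n : ℕ} (s : ℝ) (f : Eucl n → ℂ) : Eucl n → ℂ :=
  𝓕⁻ (fun ξ : Eucl n => (((1 + 4*π^2*‖ξ‖^2) ^ (s/2) : ℝ) : ℂ) * 𝓕 f ξ)

/-- The Lorentz–Sobolev quasi-norm `‖f‖_{L_s^{p,q}} = ‖(I-Δ)^{s/2} f‖_{L^{p,q}}`. -/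
def lorentzSobolevNorm {n : ℕ} (f : Eucl n → ℂ) (s p : ℝ) (q : ℝ≥0∞) : ℝ≥0∞ :=
  lorentzNormC (besselOp s f) p q

/-- The Fourier multiplier operator `T_σ f = (σ f̂)^∨`. -/
def multiplierOp {n : ℕ} (σ f : Eucl n → ℂ) : Eucl n → ℂ :=
  𝓕⁻ (fun ξ => σ ξ * 𝓕 f ξ)

/-- Convolution of two complex-valued functions on `ℝⁿ`. -/
def conv {n : ℕ} (f g : Eucl n → ℂ) (x : Eucl n) : ℂ :=
  ∫ y, f y * g (x - y)

/-- The Hardy space quasi-norm `‖f‖_{H^p} = ‖ sup_{k ∈ ℤ} |Φ_k ∗ f| ‖_{L^p}`,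
where `Φ_k = 2^{kn} Φ(2^k ·)`. -/
def hardyNorm {n : ℕ} (p : ℝ) (Φ f : Eucl n → ℂ) : ℝ≥0∞ :=
  (∫⁻ x, (⨆ k : ℤ,
      (‖conv (fun y => ((2:ℝ) ^ (k * (n:ℤ)) : ℝ) • Φ ((2:ℝ) ^ k • y)) f x‖₊ : ℝ≥0∞)) ^ p) ^ (1/p)

/-- `τ^{(s,p)} = n/(s - (n/min(1,p) - n))`. -/
def tau (n : ℕ) (s p : ℝ) : ℝ := (n:ℝ) / (s - ((n:ℝ) / min 1 p - (n:ℝ)))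

/-- `sup_{j ∈ ℤ} ‖σ(2^j ·) Ψ̂‖_{L_s^{r,q}}`. -/
def multiplierNorm {n : ℕ} (σ : Eucl n → ℂ) (Ψ : Eucl n → ℂ) (s r : ℝ) (q : ℝ≥0∞) : ℝ≥0∞ :=
  ⨆ j : ℤ, lorentzSobolevNorm (fun ξ => σ ((2:ℝ) ^ j • ξ) * 𝓕 Ψ ξ) s r q

/-- `H^{(s,γ)}(x) = (1+4π²|x|²)^{-s/2} (1+ln(1+4π²|x|²))^{-γ/2}`. -/
def Hfun (n : ℕ) (s γ : ℝ) (x : Eucl n) : ℝ :=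
  (1 + 4*π^2*‖x‖^2) ^ (-s/2) * (1 + Real.log (1 + 4*π^2*‖x‖^2)) ^ (-γ/2)

/-- `𝔗^{(s,γ)}(ξ) = |ξ|^{-(n-s)} (1+2 ln |ξ|⁻¹)^{-γ/2}` if `s < n`, and `1` if `s ≥ n`. -/
def Tfun (n : ℕ) (s γ : ℝ) (ξ : Eucl n) : ℝ :=
  if s < (n:ℝ) then ‖ξ‖ ^ (-((n:ℝ) - s)) * (1 + 2*Real.log ‖ξ‖⁻¹) ^ (-γ/2) else 1

/-- `K^{(t,γ)}(x) = (H^{(t,γ)} ∗ η̃)(x) e^{2πi⟨x,e₁⟩}`. -/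
def Kfun (n : ℕ) (hn : 0 < n) (t γ : ℝ) (ηt : Eucl n → ℂ) (x : Eucl n) : ℂ :=
  (∫ y, (Hfun n t γ y : ℂ) * ηt (x - y)) *
    Complex.exp (2 * (π:ℂ) * Complex.I *
      ((inner ℝ x (EuclideanSpace.single (⟨0, hn⟩ : Fin n) (1:ℝ)) : ℝ) : ℂ))

end

namespace HfunAux
open Metric

lemma harmonic_top : (∑' k : ℕ, ENNReal.ofReal (1/((k:ℝ)+1))) = ∞ := by
  by_contra h
  have h2 : Summable (fun k : ℕ => ((1/((k:ℝ)+1)).toNNReal)) := by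
    rw [← ENNReal.tsum_coe_ne_top_iff_summable]
    simpa [ENNReal.ofReal] using h
  have h3 : Summable (fun k : ℕ => 1/((k:ℝ)+1)) := by
    have := NNReal.summable_coe.2 h2
    convert this using 2 with k
    rw [Real.coe_toNNReal _ (by positivity)]
  have h4 : Summable (fun k : ℕ => 1/((k:ℝ))) := by
    rw [← summable_nat_add_iff 1]
    convert h3 using 2 with k
    · rfl
    · simp
  exact Real.not_summable_one_div_natCast h4

lemma eventually_one_tsum_top (f : ℕ → ℝ≥0∞) (N : ℕ) (h : ∀ k, N ≤ k → 1 ≤ f k) :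
    ∑' k, f k = ∞ := by
  have h1 : (∑' _ : ℕ, (1:ℝ≥0∞)) ≤ ∑' k, f k :=
    Summable.tsum_le_tsum_of_inj (fun k => k + N) (add_left_injective N)
      (fun _ _ => zero_le) (fun k => h _ (Nat.le_add_left N k)) ENNReal.summable ENNReal.summable
  rw [ENNReal.tsum_const_eq_top_of_ne_zero one_ne_zero] at h1
  exact top_le_iff.1 h1

lemma seriesC (c b ε : ℝ) (hc : 0 < c) (hb : 0 < b) (hε : 0 ≤ ε) (hcase : ε = 0 → b ≤ 1) :
    (∑' k : ℕ, ENNReal.ofReal (c * (2:ℝ)^((k:ℝ)*ε) * ((k:ℝ)+1)^(-b))) = ∞ := by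
  rcases hε.eq_or_lt with hε0 | hε0
  · -- ε = 0 : compare with harmonic series
    subst hε0
    have hb1 : b ≤ 1 := hcase rfl
    have key : ENNReal.ofReal c * ∑' k : ℕ, ENNReal.ofReal (1/((k:ℝ)+1)) ≤
        ∑' k : ℕ, ENNReal.ofReal (c * (2:ℝ)^((k:ℝ)*0) * ((k:ℝ)+1)^(-b)) := by
      rw [← ENNReal.tsum_mul_left]
      refine ENNReal.tsum_le_tsum fun k => ?_
      rw [← ENNReal.ofReal_mul hc.le]
      apply ENNReal.ofReal_le_ofReal
      have h1 : (1:ℝ)/((k:ℝ)+1) = ((k:ℝ)+1) ^ (-1:ℝ) := by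
        rw [Real.rpow_neg_one, one_div]
      have h2 : ((k:ℝ)+1) ^ (-1:ℝ) ≤ ((k:ℝ)+1) ^ (-b) :=
        Real.rpow_le_rpow_of_exponent_le (by have := Nat.cast_nonneg (α:=ℝ) k; linarith) (by linarith)
      rw [h1, mul_zero, Real.rpow_zero]
      calc c * ((k:ℝ)+1) ^ (-1:ℝ) ≤ c * ((k:ℝ)+1) ^ (-b) :=
            mul_le_mul_of_nonneg_left h2 hc.le
        _ = c * 1 * ((k:ℝ)+1) ^ (-b) := by ring
    rw [harmonic_top, ENNReal.mul_top (by simp [hc, hc.not_ge])] at key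
    exact top_le_iff.1 key
  · -- ε > 0 : terms eventually ≥ 1
    have h0 : Filter.Tendsto (fun x:ℝ => x^b * Real.exp (-(ε*Real.log 2)*x))
        Filter.atTop (nhds 0) :=
      tendsto_rpow_mul_exp_neg_mul_atTop_nhds_zero b _ (by positivity)
    have hlt : ∀ᶠ x:ℝ in Filter.atTop, x^b * Real.exp (-(ε*Real.log 2)*x) < c * (2:ℝ)^(-ε) :=
      h0.eventually_lt_const (by positivity)
    have hcomp : Filter.Tendsto (fun k:ℕ => (k:ℝ)+1) Filter.atTop Filter.atTop :=
      Filter.tendsto_atTop_add_const_right _ 1 tendsto_natCast_atTop_atTop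
    obtain ⟨N, hN⟩ := Filter.eventually_atTop.1 (hcomp.eventually hlt)
    refine eventually_one_tsum_top _ N fun k hk => ?_
    have hN' := (hN k hk).le
    set x : ℝ := (k:ℝ)+1 with hxdef
    have hx : (0:ℝ) < x := by positivity
    have hexp : Real.exp (-(ε*Real.log 2)*x) = (2:ℝ)^(-(ε*x)) := by
      rw [Real.rpow_def_of_pos two_pos]; ring_nf
    rw [hexp] at hN'
    rw [ENNReal.one_le_ofReal]
    have e1 : x^b * x^(-b) = 1 := by
      rw [← Real.rpow_add hx]; simp
    have e2 : (2:ℝ)^(-(ε*x)) * (2:ℝ)^(ε*x) = 1 := by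
      rw [← Real.rpow_add two_pos]; simp
    have e3 : (2:ℝ)^(-ε) * (2:ℝ)^(ε*x) = (2:ℝ)^((k:ℝ)*ε) := by
      rw [← Real.rpow_add two_pos, hxdef]; ring_nf
    calc (1:ℝ) = (x^b * x^(-b)) * ((2:ℝ)^(-(ε*x)) * (2:ℝ)^(ε*x)) := by rw [e1, e2, mul_one]
      _ = (x^b * (2:ℝ)^(-(ε*x))) * ((2:ℝ)^(ε*x) * x^(-b)) := by ring
      _ ≤ (c * (2:ℝ)^(-ε)) * ((2:ℝ)^(ε*x) * x^(-b)) :=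
          mul_le_mul_of_nonneg_right hN' (by positivity)
      _ = c * ((2:ℝ)^(-ε) * (2:ℝ)^(ε*x)) * x^(-b) := by ring
      _ = c * (2:ℝ)^((k:ℝ)*ε) * x^(-b) := by rw [e3]

lemma lintegral_Hpow_top (n : ℕ) (hn : 1 ≤ n) (a b : ℝ) (ha0 : 0 < a) (han : a ≤ (n:ℝ))
    (hb : 0 < b) (hcase : a < (n:ℝ) ∨ (a = (n:ℝ) ∧ b ≤ 1)) :
    (∫⁻ x : EuclideanSpace ℝ (Fin n), ENNReal.ofReal
        ((1 + 4*π^2*‖x‖^2) ^ (-a/2) * (1 + Real.log (1 + 4*π^2*‖x‖^2)) ^ (-b))) = ∞ := by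
  haveI : Nonempty (Fin n) := ⟨⟨0, hn⟩⟩
  set E := EuclideanSpace ℝ (Fin n)
  set f : E → ℝ≥0∞ := fun x => ENNReal.ofReal
    ((1 + 4*π^2*‖x‖^2) ^ (-a/2) * (1 + Real.log (1 + 4*π^2*‖x‖^2)) ^ (-b)) with hf
  -- measurability
  have h1 : Continuous (fun x : E => 1 + 4*π^2*‖x‖^2) := by continuity
  have h1pos : ∀ x : E, (0:ℝ) < 1 + 4*π^2*‖x‖^2 := fun x => by positivity
  have h1one : ∀ x : E, (1:ℝ) ≤ 1 + 4*π^2*‖x‖^2 := fun x => by nlinarith [sq_nonneg (π*‖x‖)]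
  have hfm : Measurable f := by
    have h2 : Continuous (fun x : E => (1 + 4*π^2*‖x‖^2) ^ (-a/2)) :=
      h1.rpow_const (fun x => Or.inl (h1pos x).ne')
    have h3 : Continuous (fun x : E => (1 + Real.log (1 + 4*π^2*‖x‖^2)) ^ (-b)) := by
      have hl : Continuous (fun x : E => 1 + Real.log (1 + 4*π^2*‖x‖^2)) :=
        continuous_const.add (h1.log fun x => (h1pos x).ne')
      refine hl.rpow_const (fun x => Or.inl ?_)
      have := Real.log_nonneg (h1one x)
      positivity
    exact (h2.mul h3).measurable.ennreal_ofReal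
  -- constants
  set C : ℝ := 4*(1 + 4*π^2) with hCdef
  have hC0 : (0:ℝ) < C := by positivity
  have hC1 : (1:ℝ) < C := by nlinarith [sq_nonneg π]
  set D : ℝ := 1 + Real.log C + 2*Real.log 2 with hDdef
  have hlogC : 0 < Real.log C := Real.log_pos hC1
  have hlog2 : 0 < Real.log 2 := Real.log_pos one_lt_two
  have hD0 : (0:ℝ) < D := by positivity
  set g : ℕ → ℝ := fun k =>
    (C*(2:ℝ)^(2*k)) ^ (-a/2) * (1 + Real.log (C*(2:ℝ)^(2*k))) ^ (-b) with hgdef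
  have h2k1 : ∀ k : ℕ, (1:ℝ) ≤ (2:ℝ)^(2*k) := fun k => one_le_pow₀ (by norm_num)
  have hBpos : ∀ k : ℕ, (0:ℝ) < C*(2:ℝ)^(2*k) := fun k => by positivity
  have hlogB0 : ∀ k : ℕ, 0 ≤ Real.log (C*(2:ℝ)^(2*k)) := fun k =>
    Real.log_nonneg (by nlinarith [h2k1 k])
  -- annuli
  set A : ℕ → Set E := fun k => ball (0:E) ((2:ℝ)^(k+1)) \ ball 0 ((2:ℝ)^k) with hAdef
  have hAm : ∀ k, MeasurableSet (A k) := fun k => measurableSet_ball.diff measurableSet_ball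
  have hAd : Pairwise (Function.onFun Disjoint A) := by
    have key : ∀ i j : ℕ, i < j → Disjoint (A i) (A j) := by
      intro i j hij
      refine Set.disjoint_left.2 ?_
      rintro x ⟨hx1, -⟩ ⟨-, hx2⟩
      exact hx2 (ball_subset_ball (pow_le_pow_right₀ (by norm_num) hij) hx1)
    intro i j hij
    rcases hij.lt_or_gt with h | h
    · exact key _ _ h
    · exact (key _ _ h).symm
  -- pointwise lower bound on each annulus
  have hpt : ∀ k : ℕ, ∀ x ∈ A k, ENNReal.ofReal (g k) ≤ f x := by
    intro k x hx
    have hx1 : ‖x‖ < (2:ℝ)^(k+1) := by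
      have := hx.1
      rwa [mem_ball_zero_iff] at this
    have hx2 : ‖x‖^2 ≤ 4*(2:ℝ)^(2*k) := by
      have h4 : ((2:ℝ)^(k+1))^2 = 4*(2:ℝ)^(2*k) := by ring
      nlinarith [norm_nonneg x]
    have hB : 1 + 4*π^2*‖x‖^2 ≤ C*(2:ℝ)^(2*k) := by
      have := mul_le_mul_of_nonneg_left hx2 (by positivity : (0:ℝ) ≤ 4*π^2)
      nlinarith [h2k1 k]
    have fac1 : (C*(2:ℝ)^(2*k)) ^ (-a/2) ≤ (1 + 4*π^2*‖x‖^2) ^ (-a/2) :=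
      Real.rpow_le_rpow_of_nonpos (h1pos x) hB (by linarith)
    have fac2 : (1 + Real.log (C*(2:ℝ)^(2*k))) ^ (-b) ≤
        (1 + Real.log (1 + 4*π^2*‖x‖^2)) ^ (-b) := by
      have hlx : 0 ≤ Real.log (1 + 4*π^2*‖x‖^2) := Real.log_nonneg (h1one x)
      have hll : Real.log (1 + 4*π^2*‖x‖^2) ≤ Real.log (C*(2:ℝ)^(2*k)) :=
        Real.log_le_log (h1pos x) hB
      exact Real.rpow_le_rpow_of_nonpos (by linarith) (by linarith) (by linarith)
    refine ENNReal.ofReal_le_ofReal ?_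
    exact mul_le_mul fac1 fac2 (Real.rpow_nonneg (by have := hlogB0 k; positivity) _)
      (Real.rpow_nonneg (h1pos x).le _)
  -- volume lower bound
  set v : ℝ≥0∞ := volume (ball (0:E) 1) with hvdef
  have hv0 : 0 < v := measure_ball_pos _ _ one_pos
  have hvt : v ≠ ∞ := measure_ball_lt_top.ne
  have hfr : Module.finrank ℝ E = n := finrank_euclideanSpace_fin
  have hballvol : ∀ m : ℕ, volume (ball (0:E) ((2:ℝ)^m)) = ENNReal.ofReal (((2:ℝ)^m)^n) * v := by
    intro m
    rw [MeasureTheory.Measure.addHaar_ball volume (0:E) (by positivity : (0:ℝ) ≤ 2^m), hfr]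
  have hvolA : ∀ k : ℕ, ENNReal.ofReal ((2:ℝ)^(k*n)) * v ≤ volume (A k) := by
    intro k
    rw [hAdef]
    rw [measure_diff (ball_subset_ball (pow_le_pow_right₀ (by norm_num) (Nat.le_succ k)))
      measurableSet_ball.nullMeasurableSet measure_ball_lt_top.ne]
    rw [hballvol, hballvol]
    refine ENNReal.le_sub_of_add_le_right ?_ ?_
    · exact ENNReal.mul_ne_top ENNReal.ofReal_ne_top hvt
    · rw [← add_mul, ← ENNReal.ofReal_add (by positivity) (by positivity)]
      refine mul_le_mul_left (ENNReal.ofReal_le_ofReal ?_) v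
      have e1 : ((2:ℝ)^k)^n = (2:ℝ)^(k*n) := by rw [← pow_mul]
      have e2 : ((2:ℝ)^(k+1))^n = (2:ℝ)^(k*n) * 2^n := by rw [← pow_mul]; ring
      have e3 : (2:ℝ)^1 ≤ (2:ℝ)^n := pow_le_pow_right₀ (by norm_num) hn
      have e4 : (0:ℝ) < 2^(k*n) := by positivity
      rw [e1, e2]
      nlinarith
  -- lower bound for each annulus integral
  have hterm : ∀ k : ℕ, ENNReal.ofReal ((2:ℝ)^(k*n) * g k) * v ≤ ∫⁻ x in A k, f x := by
    intro k
    have hgk0 : 0 ≤ g k := mul_nonneg (Real.rpow_nonneg (hBpos k).le _)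
      (Real.rpow_nonneg (by have := hlogB0 k; positivity) _)
    calc ENNReal.ofReal ((2:ℝ)^(k*n) * g k) * v
        = ENNReal.ofReal (g k) * (ENNReal.ofReal ((2:ℝ)^(k*n)) * v) := by
          rw [ENNReal.ofReal_mul (by positivity)]; ring
      _ ≤ ENNReal.ofReal (g k) * volume (A k) := mul_le_mul_right (hvolA k) _
      _ = ∫⁻ _ in A k, ENNReal.ofReal (g k) := (setLIntegral_const _ _).symm
      _ ≤ ∫⁻ x in A k, f x := setLIntegral_mono hfm (hpt k)
  -- series lower bound
  have hkey : ∀ k : ℕ, (C^(-a/2) * D^(-b)) * (2:ℝ)^((k:ℝ)*((n:ℝ)-a)) * ((k:ℝ)+1)^(-b) ≤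
      (2:ℝ)^(k*n) * g k := by
    intro k
    have hlogB : Real.log (C*(2:ℝ)^(2*k)) = Real.log C + (2*(k:ℝ))*Real.log 2 := by
      rw [Real.log_mul hC0.ne' (by positivity), Real.log_pow]
      push_cast; ring
    have hDb : D^(-b) * ((k:ℝ)+1)^(-b) ≤ (1 + Real.log (C*(2:ℝ)^(2*k)))^(-b) := by
      rw [← Real.mul_rpow hD0.le (by positivity)]
      refine Real.rpow_le_rpow_of_nonpos (by have := hlogB0 k; positivity) ?_ (by linarith)
      rw [hlogB, hDdef]
      nlinarith [Nat.cast_nonneg (α := ℝ) k]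
    have hCa : (C*(2:ℝ)^(2*k)) ^ (-a/2) = C^(-a/2) * (2:ℝ)^(-((k:ℝ)*a)) := by
      rw [Real.mul_rpow hC0.le (by positivity)]
      congr 1
      rw [← Real.rpow_natCast 2 (2*k), ← Real.rpow_mul (by norm_num)]
      push_cast; ring_nf
    have h2n : ((2:ℝ))^(k*n) = (2:ℝ)^((k:ℝ)*(n:ℝ)) := by
      rw [← Real.rpow_natCast 2 (k*n)]; push_cast; ring_nf
    have hsplit : (2:ℝ)^((k:ℝ)*(n:ℝ)) * (2:ℝ)^(-((k:ℝ)*a)) = (2:ℝ)^((k:ℝ)*((n:ℝ)-a)) := by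
      rw [← Real.rpow_add two_pos]; ring_nf
    calc (C^(-a/2) * D^(-b)) * (2:ℝ)^((k:ℝ)*((n:ℝ)-a)) * ((k:ℝ)+1)^(-b)
        = ((2:ℝ)^((k:ℝ)*(n:ℝ)) * (C^(-a/2) * (2:ℝ)^(-((k:ℝ)*a)))) *
            (D^(-b) * ((k:ℝ)+1)^(-b)) := by rw [← hsplit]; ring
      _ ≤ ((2:ℝ)^((k:ℝ)*(n:ℝ)) * (C^(-a/2) * (2:ℝ)^(-((k:ℝ)*a)))) *
            (1 + Real.log (C*(2:ℝ)^(2*k)))^(-b) := by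
          refine mul_le_mul_of_nonneg_left hDb ?_
          positivity
      _ = (2:ℝ)^(k*n) * g k := by rw [hgdef]; dsimp only; rw [h2n, hCa]; ring
  have hsum : (∑' k : ℕ, ENNReal.ofReal ((2:ℝ)^(k*n) * g k)) = ∞ := by
    have hc2 : (0:ℝ) < C^(-a/2) * D^(-b) := by positivity
    have hS := seriesC (C^(-a/2) * D^(-b)) b ((n:ℝ)-a) hc2 hb (by linarith) ?_
    · have hle := ENNReal.tsum_le_tsum (fun k => ENNReal.ofReal_le_ofReal (hkey k))
      rw [hS] at hle
      exact top_le_iff.1 hle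
    · intro h0
      rcases hcase with h | ⟨_, hb1⟩
      · exfalso; linarith
      · exact hb1
  -- conclude
  have h5 : ∑' k, ∫⁻ x in A k, f x ≤ ∫⁻ x, f x := by
    rw [← lintegral_iUnion hAm hAd]
    exact setLIntegral_le_lintegral _ _
  have h6 : (∑' k : ℕ, ENNReal.ofReal ((2:ℝ)^(k*n) * g k) * v) ≤ ∑' k, ∫⁻ x in A k, f x :=
    ENNReal.tsum_le_tsum hterm
  rw [ENNReal.tsum_mul_right, hsum, ENNReal.top_mul hv0.ne'] at h6
  exact top_le_iff.1 (h6.trans h5)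
end HfunAux

/-- If `0 < a ≤ n`, `b > 0` and either `a < n`, or `a = n` and `b ≤ 1`, then
`∫ (1+4π²|x|²)^{-a/2}(1+ln(1+4π²|x|²))^{-b} dx = ∞`; in particular
`‖H^{(t,γ)}‖_{L^{min(1,p)}} = ∞` when `t·min(1,p) < n`, or `t·min(1,p) = n` and
`min(1,p)·γ/2 ≤ 1`. -/
theorem Hfun_infinite_norm
    (n : ℕ) (hn : 1 ≤ n) (a b : ℝ) (ha0 : 0 < a) (han : a ≤ (n:ℝ)) (hb : 0 < b)
    (hcase : a < (n:ℝ) ∨ (a = (n:ℝ) ∧ b ≤ 1)) :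
    (∫⁻ x : Eucl n, ENNReal.ofReal
        ((1 + 4*π^2*‖x‖^2) ^ (-a/2) * (1 + Real.log (1 + 4*π^2*‖x‖^2)) ^ (-b))) = ∞ ∧
    ∀ p t γ : ℝ, 0 < p → 0 < t → 0 < γ →
      (t * min 1 p < (n:ℝ) ∨ (t * min 1 p = (n:ℝ) ∧ min 1 p * γ / 2 ≤ 1)) →
      eLpNorm (Hfun n t γ) (ENNReal.ofReal (min 1 p)) volume = ∞ := by
  constructor
  · exact HfunAux.lintegral_Hpow_top n hn a b ha0 han hb hcase
  · intro p t γ hp ht hγ hc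
    set q : ℝ := min 1 p with hqdef
    have hq0 : 0 < q := lt_min one_pos hp
    have hq1 : q ≤ 1 := min_le_left _ _
    have han' : t*q ≤ (n:ℝ) := by rcases hc with h | ⟨h, _⟩ <;> linarith
    have hcase' : t*q < (n:ℝ) ∨ (t*q = (n:ℝ) ∧ γ*q/2 ≤ 1) := by
      rcases hc with h | ⟨h1, h2⟩
      · exact Or.inl h
      · exact Or.inr ⟨h1, by linarith [h2, (by ring : q * γ / 2 = γ*q/2)]⟩
    have hkey := HfunAux.lintegral_Hpow_top n hn (t*q) (γ*q/2)
      (by positivity) han' (by positivity) hcase'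
    have hne0 : ENNReal.ofReal q ≠ 0 := (ENNReal.ofReal_pos.2 hq0).ne'
    rw [eLpNorm_eq_lintegral_rpow_enorm_toReal hne0 ENNReal.ofReal_ne_top]
    have htr : (ENNReal.ofReal q).toReal = q := ENNReal.toReal_ofReal hq0.le
    rw [htr]
    have heq : (∫⁻ x : Eucl n, ‖Hfun n t γ x‖ₑ ^ q) =
        ∫⁻ x : Eucl n, ENNReal.ofReal
          ((1 + 4*π^2*‖x‖^2) ^ (-(t*q)/2) *
            (1 + Real.log (1 + 4*π^2*‖x‖^2)) ^ (-(γ*q/2))) := by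
      refine lintegral_congr fun x => ?_
      have hA : (0:ℝ) < 1 + 4*π^2*‖x‖^2 := by positivity
      have hA1 : (1:ℝ) ≤ 1 + 4*π^2*‖x‖^2 := by nlinarith [sq_nonneg (π*‖x‖)]
      have hL : (0:ℝ) ≤ 1 + Real.log (1 + 4*π^2*‖x‖^2) := by
        have := Real.log_nonneg hA1; linarith
      have hH0 : 0 ≤ Hfun n t γ x :=
        mul_nonneg (Real.rpow_nonneg hA.le _) (Real.rpow_nonneg hL _)
      rw [Real.enorm_eq_ofReal hH0, ENNReal.ofReal_rpow_of_nonneg hH0 hq0.le]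
      congr 1
      simp only [Hfun]
      rw [Real.mul_rpow (Real.rpow_nonneg hA.le _) (Real.rpow_nonneg hL _),
        ← Real.rpow_mul hA.le, ← Real.rpow_mul hL,
        show (-t/2)*q = -(t*q)/2 from by ring,
        show (-γ/2)*q = -(γ*q/2) from by ring]
    rw [heq, hkey]
    exact ENNReal.top_rpow_of_pos (by positivity)
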